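/- For every p ∈ [1/2, 1) and every n ≥ 1, ‖D_n^+‖_{H^p} ≤ min(2/(1-p), log(5n)). -/

import Mathlib

open Real Finset MeasureTheory

lemma abs_exp_I_sub_one (t : ℝ) :
    ‖Complex.exp (Complex.I * t) - 1‖ = 2 * |Real.sin (t/2)| := by
  have h : Complex.exp (Complex.I * t) - 1
      = Complex.ofReal (Real.cos t - 1) + Complex.ofReal (Real.sin t) * Complex.I := by
    rw [mul_comm, Complex.exp_mul_I, ← Complex.ofReal_cos, ← Complex.ofReal_sin]
    push_cast; ring
  rw [h, Complex.norm_def, Complex.normSq_apply]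
  simp only [Complex.add_re, Complex.ofReal_re, Complex.mul_re, Complex.I_re, Complex.I_im,
    Complex.ofReal_im, Complex.add_im, Complex.mul_im]
  rw [Real.abs_sin_half]
  rw [show ((Real.cos t - 1 + (Real.sin t * 0 - 0 * 1)) * (Real.cos t - 1 + (Real.sin t * 0 - 0 * 1)) +
      (0 + (Real.sin t * 1 + 0 * 0)) * (0 + (Real.sin t * 1 + 0 * 0)))
      = 4 * ((1 - Real.cos t)/2) by nlinarith [Real.sin_sq_add_cos_sq t]]
  rw [Real.sqrt_mul (by norm_num : (0:ℝ) ≤ 4)]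
  rw [show Real.sqrt 4 = 2 by rw [show (4:ℝ) = 2^2 by norm_num, Real.sqrt_sq (by norm_num)]]

lemma pointwise_bound (n : ℕ) {t : ℝ} (ht : t ∈ Set.Icc (-Real.pi) Real.pi) (ht0 : t ≠ 0) :
    ‖∑ j ∈ Finset.range n, Complex.exp (Complex.I * t) ^ j‖
      ≤ min (n : ℝ) (Real.pi / |t|) := by
  have hpi := Real.pi_pos
  have habs1 : ‖Complex.exp (Complex.I * t)‖ = 1 := by
    simp [Complex.norm_exp]
  refine le_min ?_ ?_
  · calc ‖∑ j ∈ Finset.range n, Complex.exp (Complex.I * t) ^ j‖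
        ≤ ∑ j ∈ Finset.range n, ‖Complex.exp (Complex.I * t) ^ j‖ :=
          norm_sum_le _ _
      _ = n := by simp [norm_pow, habs1]
  · have ht' : |t| ≤ Real.pi := abs_le.2 ⟨ht.1, ht.2⟩
    have htpos : 0 < |t| := abs_pos.2 ht0
    have hz : Complex.exp (Complex.I * t) ≠ 1 := by
      intro h
      rw [Complex.exp_eq_one_iff] at h
      obtain ⟨k, hk⟩ := h
      have h2 : (Complex.I) * t = Complex.I * ((k : ℂ) * (2 * Real.pi)) := by
        rw [hk]; push_cast; ring
      have h3 := mul_left_cancel₀ Complex.I_ne_zero h2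
      have ht2 : t = (k : ℝ) * (2 * Real.pi) := by exact_mod_cast h3
      have hk0 : k ≠ 0 := by
        intro h0; rw [h0] at ht2; simp at ht2; exact ht0 ht2
      have hk1 : (1:ℝ) ≤ |(k:ℝ)| := by exact_mod_cast Int.one_le_abs hk0
      have : 2 * Real.pi ≤ |t| := by
        rw [ht2, abs_mul, abs_of_pos (by positivity : (0:ℝ) < 2 * Real.pi)]
        nlinarith
      nlinarith
    have hsin : 2 * |t| / Real.pi ≤ ‖Complex.exp (Complex.I * t) - 1‖ := by
      rw [abs_exp_I_sub_one]
      have hj := Real.mul_abs_le_abs_sin (x := t/2) (by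
        rw [abs_div, abs_of_pos (by norm_num : (0:ℝ) < 2)]; linarith)
      rw [abs_div, abs_of_pos (by norm_num : (0:ℝ) < 2)] at hj
      have e : 2 / Real.pi * (|t| / 2) = |t| / Real.pi := by field_simp
      rw [e, div_le_iff₀ hpi] at hj
      rw [div_le_iff₀ hpi]
      linarith
    rw [geom_sum_eq hz, norm_div]
    have hd : 0 < ‖Complex.exp (Complex.I * t) - 1‖ :=
      lt_of_lt_of_le (by positivity) hsin
    rw [div_le_div_iff₀ hd htpos]
    have hnum : ‖Complex.exp (Complex.I * t) ^ n - 1‖ ≤ 2 := by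
      calc ‖Complex.exp (Complex.I * t) ^ n - 1‖
          ≤ ‖Complex.exp (Complex.I * t) ^ n‖ + ‖(1:ℂ)‖ :=
            norm_sub_le _ _
        _ = 2 := by rw [norm_pow, habs1]; norm_num
    rw [div_le_iff₀ hpi] at hsin
    nlinarith [abs_nonneg t]

noncomputable def g (n : ℕ) (t : ℝ) : ℝ := min (n : ℝ) (Real.pi / |t|)


lemma g_nonneg (n : ℕ) (t : ℝ) : 0 ≤ g n t :=
  le_min (Nat.cast_nonneg n) (by positivity)


lemma g_le (n : ℕ) (t : ℝ) : g n t ≤ n := min_le_left _ _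


lemma g_meas (n : ℕ) : Measurable (g n) := by
  apply measurable_const.min
  exact measurable_const.div (continuous_abs.measurable)


lemma g_even (n : ℕ) (t : ℝ) : g n (-t) = g n t := by simp [g]


lemma g_rpow_integrable (n : ℕ) (q a b : ℝ) (hq : 0 ≤ q) :
    IntervalIntegrable (fun t => g n t ^ q) volume a b := by
  apply IntervalIntegrable.mono_fun (intervalIntegrable_const (c := (n:ℝ)^q))
  · exact ((g_meas n).pow_const q).aestronglyMeasurable
  · apply Filter.Eventually.of_forall
    intro t
    simp only [Real.norm_eq_abs]
    rw [abs_of_nonneg (Real.rpow_nonneg (g_nonneg n t) q),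
      abs_of_nonneg (Real.rpow_nonneg (Nat.cast_nonneg n) q)]
    exact Real.rpow_le_rpow (g_nonneg n t) (g_le n t) hq


lemma g_integrable (n : ℕ) (a b : ℝ) :
    IntervalIntegrable (g n) volume a b := by
  have := g_rpow_integrable n 1 a b zero_le_one
  simpa [Real.rpow_one] using this


lemma ae_ne_zero : ∀ᵐ (x : ℝ), x ≠ 0 := by
  have h : ({(0:ℝ)} : Set ℝ)ᶜ ∈ MeasureTheory.ae volume :=
    MeasureTheory.compl_mem_ae_iff.2 (measure_singleton 0)
  filter_upwards [h] with x hx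
  simpa using hx


lemma g_mid (n : ℕ) (hn : 1 ≤ n) (q : ℝ) :
    ∫ t in (-(Real.pi/n))..(Real.pi/n), g n t ^ q = 2 * (Real.pi/n) * (n:ℝ)^q := by
  have hpi := Real.pi_pos
  have hn' : (1:ℝ) ≤ n := by exact_mod_cast hn
  have hn0 : (0:ℝ) < n := by linarith
  rw [intervalIntegral.integral_congr_ae (g := fun _ => (n:ℝ)^q)]
  · rw [intervalIntegral.integral_const, smul_eq_mul]
    ring
  · filter_upwards [ae_ne_zero] with x hx hmem
    have hx' : |x| ≤ Real.pi/n := by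
      rw [Set.uIoc_of_le (by linarith [div_pos hpi hn0] : -(Real.pi/n) ≤ Real.pi/n)] at hmem
      rw [abs_le]; exact ⟨hmem.1.le, hmem.2⟩
    have hxpos : 0 < |x| := abs_pos.2 hx
    have : (n:ℝ) ≤ Real.pi / |x| := by
      rw [le_div_iff₀ hxpos]
      calc (n:ℝ) * |x| ≤ n * (Real.pi/n) := by nlinarith
        _ = Real.pi := by field_simp
    simp [g, min_eq_left this]


lemma g_right (n : ℕ) (hn : 1 ≤ n) {q : ℝ} (hq : 0 < q) (hq1 : q < 1) :
    ∫ t in (Real.pi/n)..Real.pi, g n t ^ q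
      = Real.pi^q * ((Real.pi^(1-q) - (Real.pi/n)^(1-q))/(1-q)) := by
  have hpi := Real.pi_pos
  have hn' : (1:ℝ) ≤ n := by exact_mod_cast hn
  have hn0 : (0:ℝ) < n := by linarith
  have hc : 0 < Real.pi/n := div_pos hpi hn0
  have hcle : Real.pi/n ≤ Real.pi := by
    rw [div_le_iff₀ hn0]; nlinarith
  rw [intervalIntegral.integral_congr (g := fun t => Real.pi^q * t^(-q))]
  · rw [intervalIntegral.integral_const_mul, integral_rpow (Or.inl (by linarith))]
    norm_num [← sub_eq_neg_add]
  · intro t htmem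
    rw [Set.uIcc_of_le hcle] at htmem
    have ht0 : 0 < t := lt_of_lt_of_le hc htmem.1
    have habs : |t| = t := abs_of_pos ht0
    have hmin : g n t = Real.pi / t := by
      rw [g, habs, min_eq_right]
      rw [div_le_iff₀ ht0]
      calc Real.pi = n * (Real.pi/n) := by field_simp
        _ ≤ n * t := by nlinarith [htmem.1]
    simp only [hmin]
    rw [Real.div_rpow hpi.le ht0.le, Real.rpow_neg ht0.le, div_eq_mul_inv]


lemma g_left (n : ℕ) (hn : 1 ≤ n) (q : ℝ) :
    ∫ t in (-Real.pi)..(-(Real.pi/n)), g n t ^ q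
      = ∫ t in (Real.pi/n)..Real.pi, g n t ^ q := by
  have : ∫ t in (-Real.pi)..(-(Real.pi/n)), g n t ^ q
      = ∫ t in (-Real.pi)..(-(Real.pi/n)), (fun s => g n s ^ q) (-t) := by
    apply intervalIntegral.integral_congr
    intro t _
    simp [g_even]
  rw [this, intervalIntegral.integral_comp_neg (fun s => g n s ^ q)]
  simp


lemma g_right_one (n : ℕ) (hn : 1 ≤ n) :
    ∫ t in (Real.pi/n)..Real.pi, g n t = Real.pi * Real.log n := by
  have hpi := Real.pi_pos
  have hn' : (1:ℝ) ≤ n := by exact_mod_cast hn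
  have hn0 : (0:ℝ) < n := by linarith
  have hc : 0 < Real.pi/n := div_pos hpi hn0
  have hcle : Real.pi/n ≤ Real.pi := by rw [div_le_iff₀ hn0]; nlinarith
  rw [intervalIntegral.integral_congr (g := fun t => Real.pi * t⁻¹)]
  · rw [intervalIntegral.integral_const_mul, integral_inv (by
      rw [Set.uIcc_of_le hcle]
      intro hmem
      exact absurd hmem.1 (by linarith))]
    have hdiv : Real.pi / (Real.pi / n) = n := by field_simp
    rw [hdiv]
  · intro t htmem
    rw [Set.uIcc_of_le hcle] at htmem
    have ht0 : 0 < t := lt_of_lt_of_le hc htmem.1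
    have habs : |t| = t := abs_of_pos ht0
    rw [g, habs, min_eq_right (by
      rw [div_le_iff₀ ht0]
      calc Real.pi = n * (Real.pi/n) := by field_simp
        _ ≤ n * t := by nlinarith [htmem.1])]
    rw [div_eq_mul_inv]

lemma g_split (n : ℕ) {q : ℝ} (hq : 0 ≤ q) :
    ∫ t in (-Real.pi)..Real.pi, g n t ^ q
      = (∫ t in (-Real.pi)..(-(Real.pi/n)), g n t ^ q)
        + (∫ t in (-(Real.pi/n))..(Real.pi/n), g n t ^ q)
        + (∫ t in (Real.pi/n)..Real.pi, g n t ^ q) := by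
  have h1 := intervalIntegral.integral_add_adjacent_intervals
    (g_rpow_integrable n q (-Real.pi) (-(Real.pi/n)) hq)
    (g_rpow_integrable n q (-(Real.pi/n)) (Real.pi/n) hq)
  have h2 := intervalIntegral.integral_add_adjacent_intervals
    (g_rpow_integrable n q (-Real.pi) (Real.pi/n) hq)
    (g_rpow_integrable n q (Real.pi/n) Real.pi hq)
  linarith


lemma g_total (n : ℕ) (hn : 1 ≤ n) {q : ℝ} (hq : 0 < q) (hq1 : q < 1) :
    ∫ t in (-Real.pi)..Real.pi, g n t ^ q
      = 2 * (Real.pi/n) * (n:ℝ)^q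
        + 2 * (Real.pi^q * ((Real.pi^(1-q) - (Real.pi/n)^(1-q))/(1-q))) := by
  rw [g_split n hq.le, g_left n hn, g_mid n hn, g_right n hn hq hq1]; ring


lemma g_total_one (n : ℕ) (hn : 1 ≤ n) :
    ∫ t in (-Real.pi)..Real.pi, g n t = 2 * Real.pi + 2 * Real.pi * Real.log n := by
  have e : ∫ t in (-Real.pi)..Real.pi, g n t
      = ∫ t in (-Real.pi)..Real.pi, g n t ^ (1:ℝ) := by norm_num
  have e2 : ∫ t in (Real.pi/n)..Real.pi, g n t ^ (1:ℝ)
      = ∫ t in (Real.pi/n)..Real.pi, g n t := by norm_num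
  have e3 : ∫ t in (-(Real.pi/n))..(Real.pi/n), g n t ^ (1:ℝ) = 2 * (Real.pi/n) * n := by
    rw [g_mid n hn 1, Real.rpow_one]
  have hn0 : (0:ℝ) < n := by exact_mod_cast hn
  rw [e, g_split n zero_le_one, g_left n hn, e2, e3, g_right_one n hn]
  field_simp
  ring


lemma tangent_line {x A p : ℝ} (hx : 0 ≤ x) (hA : 0 < A) (hp0 : 0 ≤ p) (hp1 : p ≤ 1) :
    x ^ p ≤ A^p + p * A^(p-1) * (x - A) := by
  have hxA0 : 0 ≤ x / A := by positivity
  have hs : -1 ≤ x/A - 1 := by linarith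
  have hB := rpow_one_add_le_one_add_mul_self hs hp0 hp1
  have hxA : (1 + (x/A - 1)) = x/A := by ring
  rw [hxA] at hB
  have h2 := mul_le_mul_of_nonneg_left hB (Real.rpow_nonneg hA.le p)
  calc x^p = A^p * (x/A)^p := by
        rw [← Real.mul_rpow hA.le hxA0]
        congr 1
        field_simp
    _ ≤ A^p * (1 + p*(x/A - 1)) := h2
    _ = A^p + p*A^(p-1)*(x - A) := by
        rw [Real.rpow_sub hA, Real.rpow_one]
        field_simp

lemma final_a {p : ℝ} (hp1 : 1/2 ≤ p) (hp2 : p < 1) :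
    ((1:ℝ)/(1-p)) ^ ((1:ℝ)/p) ≤ 2/(1-p) := by
  have hp0 : 0 < p := by linarith
  have hup : (0:ℝ) < 1 - p := by linarith
  set k : ℝ := Real.log (1-p) with hk
  have hklog : Real.log (1/(2*(1-p))) = -(Real.log 2 + k) := by
    rw [one_div, Real.log_inv, Real.log_mul two_ne_zero hup.ne']
  have hkle : Real.log (1/(2*(1-p))) ≤ 1/(2*(1-p)) - 1 :=
    Real.log_le_sub_one_of_pos (by positivity)
  rw [hklog] at hkle
  have h4 : (1/(2*(1-p)) - 1) * (1-p) = 1/2 - (1-p) := by field_simp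
  have h2 := Real.log_two_gt_d9
  have hkey0 : -k * (1-p) ≤ p * Real.log 2 := by
    nlinarith [mul_le_mul_of_nonneg_right hkle hup.le,
      mul_nonneg (by linarith : (0:ℝ) ≤ p - 1/2) (by linarith : (0:ℝ) ≤ 2*Real.log 2 - 1)]
  have hkey : (1/p) * Real.log ((1-p)⁻¹) ≤ Real.log (2/(1-p)) := by
    rw [Real.log_inv, Real.log_div two_ne_zero hup.ne', one_div_mul_eq_div,
      div_le_iff₀ hp0]
    nlinarith [hkey0]
  calc (1/(1-p)) ^ ((1:ℝ)/p) = Real.exp ((1/p) * Real.log (1/(1-p))) := by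
        rw [Real.rpow_def_of_pos (by positivity), mul_comm]
    _ ≤ Real.exp (Real.log (2/(1-p))) := by
        apply Real.exp_le_exp.2
        rw [one_div (1-p)]
        exact hkey
    _ = 2/(1-p) := Real.exp_log (by positivity)


lemma conclude {M p : ℝ} (n : ℕ) (hn : 1 ≤ n) (hp1 : 1/2 ≤ p) (hp2 : p < 1)
    (hM0 : 0 ≤ M) (hMa : M ≤ 1/(1-p)) (hMb : M ≤ (1 + Real.log n)^p) :
    M ^ (1/p) ≤ min (2 / (1 - p)) (Real.log (5 * n)) := by
  have hp0 : 0 < p := by linarith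
  have hn1 : (1:ℝ) ≤ n := by exact_mod_cast hn
  have hA0 : (0:ℝ) < 1 + Real.log n := by nlinarith [Real.log_nonneg hn1]
  refine le_min ?_ ?_
  · exact (Real.rpow_le_rpow hM0 hMa (by positivity)).trans (final_a hp1 hp2)
  · have h1 : M ^ (1/p) ≤ ((1 + Real.log n)^p) ^ (1/p) :=
      Real.rpow_le_rpow hM0 hMb (by positivity)
    have h2 : ((1 + Real.log n)^p) ^ (1/p) = 1 + Real.log n := by
      rw [← Real.rpow_mul hA0.le, mul_one_div, div_self hp0.ne', Real.rpow_one]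
    have h3 : 1 + Real.log n ≤ Real.log (5*n) := by
      rw [Real.log_mul (by norm_num) (by positivity)]
      have : (1:ℝ) ≤ Real.log 5 := by
        rw [Real.le_log_iff_exp_le (by norm_num)]
        nlinarith [Real.exp_one_lt_d9]
      linarith
    rw [h2] at h1
    exact h1.trans h3

theorem stmt_7 (p : ℝ) (hp : p ∈ Set.Ico (1/2 : ℝ) 1) (n : ℕ) (hn : 1 ≤ n) :
    ((1 / (2 * Real.pi)) *
        ∫ t in (-Real.pi)..Real.pi,
          ‖∑ j ∈ Finset.range n, Complex.exp (Complex.I * t) ^ j‖ ^ p) ^ (1 / p)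
      ≤ min (2 / (1 - p)) (Real.log (5 * n)) := by
  obtain ⟨hp1, hp2⟩ := hp
  have hp0 : 0 < p := by linarith
  have hpi := Real.pi_pos
  have hn1 : (1:ℝ) ≤ n := by exact_mod_cast hn
  have hn0 : (0:ℝ) < n := by linarith
  have hcont : Continuous fun t : ℝ =>
      ‖∑ j ∈ Finset.range n, Complex.exp (Complex.I * t) ^ j‖ := by
    apply continuous_norm.comp
    apply continuous_finset_sum
    intro j _
    exact (Complex.continuous_exp.comp (continuous_const.mul Complex.continuous_ofReal)).pow j
  have hDcont : Continuous fun t : ℝ =>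
      ‖∑ j ∈ Finset.range n, Complex.exp (Complex.I * t) ^ j‖ ^ p :=
    hcont.rpow_const (fun x => Or.inr hp0.le)
  have hDint : IntervalIntegrable
      (fun t : ℝ => ‖∑ j ∈ Finset.range n, Complex.exp (Complex.I * t) ^ j‖ ^ p)
      volume (-Real.pi) Real.pi := hDcont.intervalIntegrable _ _
  have hstep1 : (∫ t in (-Real.pi)..Real.pi,
        ‖∑ j ∈ Finset.range n, Complex.exp (Complex.I * t) ^ j‖ ^ p)
      ≤ ∫ t in (-Real.pi)..Real.pi, g n t ^ p := by
    apply intervalIntegral.integral_mono_ae_restrict (by linarith : -Real.pi ≤ Real.pi) hDint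
      (g_rpow_integrable n p _ _ hp0.le)
    have hmem := MeasureTheory.ae_restrict_mem (μ := volume) (measurableSet_Icc :
      MeasurableSet (Set.Icc (-Real.pi) Real.pi))
    have hne : ∀ᵐ x ∂(volume.restrict (Set.Icc (-Real.pi) Real.pi)), x ≠ 0 :=
      ae_ne_zero.filter_mono (MeasureTheory.ae_mono Measure.restrict_le_self)
    filter_upwards [hmem, hne] with t htI ht0
    exact Real.rpow_le_rpow (norm_nonneg _) (pointwise_bound n htI ht0) hp0.le
  -- value of ∫ g^p
  set u : ℝ := (n:ℝ) ^ (p - 1) with hu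
  have hu0 : 0 < u := Real.rpow_pos_of_pos hn0 _
  have hu1 : u ≤ 1 := Real.rpow_le_one_of_one_le_of_nonpos hn1 (by linarith)
  have hnp : (n:ℝ)^p = u * n := by
    rw [hu, ← Real.rpow_add_one hn0.ne' (p-1)]; norm_num
  have hprod : (n:ℝ)^(1-p) * u = 1 := by
    rw [hu, ← Real.rpow_add hn0]; norm_num
  have e1 : (Real.pi/n) * (n:ℝ)^p = Real.pi * u := by
    rw [hnp]; field_simp
  have e2 : Real.pi^p * Real.pi^(1-p) = Real.pi := by
    rw [← Real.rpow_add hpi]; norm_num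
  have e3 : Real.pi^p * (Real.pi/n)^(1-p) = Real.pi * u := by
    have e3' : Real.pi / (n:ℝ)^(1-p) = Real.pi * u := by
      rw [div_eq_iff (Real.rpow_pos_of_pos hn0 _).ne']
      nlinarith [hprod]
    rw [Real.div_rpow hpi.le hn0.le, ← mul_div_assoc, e2, e3']
  have hval : (∫ t in (-Real.pi)..Real.pi, g n t ^ p)
      = 2 * Real.pi * u + 2 * Real.pi * ((1 - u)/(1-p)) := by
    rw [g_total n hn hp0 hp2]
    linear_combination 2*e1 + (2/(1-p))*e2 - (2/(1-p))*e3
  have hInn : (0:ℝ) ≤ ∫ t in (-Real.pi)..Real.pi,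
      ‖∑ j ∈ Finset.range n, Complex.exp (Complex.I * t) ^ j‖ ^ p := by
    apply intervalIntegral.integral_nonneg (by linarith)
    intro t _
    exact Real.rpow_nonneg (norm_nonneg _) p
  have hM0 : (0:ℝ) ≤ (1 / (2 * Real.pi)) *
      ∫ t in (-Real.pi)..Real.pi,
        ‖∑ j ∈ Finset.range n, Complex.exp (Complex.I * t) ^ j‖ ^ p := by
    positivity
  -- bound (a)
  have hMa : (1 / (2 * Real.pi)) *
      (∫ t in (-Real.pi)..Real.pi,
        ‖∑ j ∈ Finset.range n, Complex.exp (Complex.I * t) ^ j‖ ^ p)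
      ≤ 1/(1-p) := by
    have h1 := hval ▸ hstep1
    have h2 : (1 / (2 * Real.pi)) *
        (∫ t in (-Real.pi)..Real.pi,
          ‖∑ j ∈ Finset.range n, Complex.exp (Complex.I * t) ^ j‖ ^ p)
        ≤ u + (1-u)/(1-p) := by
      rw [show u + (1-u)/(1-p)
          = (1/(2*Real.pi)) * (2 * Real.pi * u + 2 * Real.pi * ((1 - u)/(1-p)))
        by field_simp]
      exact mul_le_mul_of_nonneg_left h1 (by positivity)
    have h3 : u + (1-u)/(1-p) ≤ 1/(1-p) := by
      have he : 1/(1-p) - (u + (1-u)/(1-p)) = u*p/(1-p) := by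
        field_simp [show (1:ℝ)-p ≠ 0 from by linarith]
        ring
      have : (0:ℝ) ≤ u*p/(1-p) := by
        apply div_nonneg (by positivity) (by linarith)
      linarith
    linarith
  -- bound (b)
  have hA0 : (0:ℝ) < 1 + Real.log n := by nlinarith [Real.log_nonneg hn1]
  set A : ℝ := 1 + Real.log n with hAdef
  have hMb : (1 / (2 * Real.pi)) *
      (∫ t in (-Real.pi)..Real.pi,
        ‖∑ j ∈ Finset.range n, Complex.exp (Complex.I * t) ^ j‖ ^ p)
      ≤ A ^ p := by
    have hint2 : (∫ t in (-Real.pi)..Real.pi, g n t ^ p)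
        ≤ ∫ t in (-Real.pi)..Real.pi, ((A^p - p*A^(p-1)*A) + p*A^(p-1) * g n t) := by
      apply intervalIntegral.integral_mono_on (by linarith) (g_rpow_integrable n p _ _ hp0.le)
      · exact (intervalIntegrable_const).add ((g_integrable n _ _).const_mul _)
      · intro t _
        have := tangent_line (g_nonneg n t) hA0 hp0.le hp2.le
        calc g n t ^ p ≤ A^p + p * A^(p-1) * (g n t - A) := this
          _ = (A^p - p*A^(p-1)*A) + p*A^(p-1) * g n t := by ring
    have hval2 : (∫ t in (-Real.pi)..Real.pi, ((A^p - p*A^(p-1)*A) + p*A^(p-1) * g n t))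
        = 2*Real.pi*(A^p) := by
      rw [intervalIntegral.integral_add (intervalIntegrable_const)
        ((g_integrable n _ _).const_mul _), intervalIntegral.integral_const,
        intervalIntegral.integral_const_mul, g_total_one n hn, smul_eq_mul]
      have hthis : Real.pi * A = Real.pi + Real.pi * Real.log n := by rw [hAdef]; ring
      linear_combination (-2*p*A^(p-1)) * hthis
    have h1 : (∫ t in (-Real.pi)..Real.pi,
        ‖∑ j ∈ Finset.range n, Complex.exp (Complex.I * t) ^ j‖ ^ p)
        ≤ 2*Real.pi*(A^p) := le_trans hstep1 (le_trans hint2 (le_of_eq hval2))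
    calc (1 / (2 * Real.pi)) *
        (∫ t in (-Real.pi)..Real.pi,
          ‖∑ j ∈ Finset.range n, Complex.exp (Complex.I * t) ^ j‖ ^ p)
        ≤ (1/(2*Real.pi)) * (2*Real.pi*(A^p)) :=
          mul_le_mul_of_nonneg_left h1 (by positivity)
      _ = A^p := by field_simp
  exact conclude n hn hp1 hp2 hM0 hMa hMb
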